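/- Let n ∈ {p^k, p^k·q, p²q², pqr, p²qr, pqrs : p, q, r, s are distinct primes and k ≥ 1}, and let S be an inverse-closed subset of ℤ_n∖{0} such that ⟨S⟩ = ℤ_n, |S| divides n, and |S| and n/|S| are coprime. Then Cay(ℤ_n, S) admits a total perfect code if and only if s ≢ s′ (mod |S|) for any two distinct s, s′ ∈ S. -/

import Mathlib

open Finset

set_option linter.unusedSectionVars false
set_option maxHeartbeats 1000000


/-- The Cayley graph of an additive group `G` with connection set `S`.
(When `S` is inverse-closed and does not contain `0`, `x` and `y` are adjacent
iff `y - x ∈ S`.) -/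
def cayley {G : Type*} [AddGroup G] (S : Set G) : SimpleGraph G :=
  SimpleGraph.fromRel (fun x y => y - x ∈ S)

/-- A perfect code in a graph: an independent set such that every vertex outside it
has exactly one neighbour in it. -/
def IsPerfectCode {V : Type*} (Γ : SimpleGraph V) (C : Set V) : Prop :=
  (∀ x ∈ C, ∀ y ∈ C, ¬ Γ.Adj x y) ∧ ∀ v, v ∉ C → ∃! c, c ∈ C ∧ Γ.Adj v c

/-- A total perfect code in a graph: every vertex has exactly one neighbour in it. -/
def IsTotalPerfectCode {V : Type*} (Γ : SimpleGraph V) (C : Set V) : Prop :=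
  ∀ v, ∃! c, c ∈ C ∧ Γ.Adj v c

/-- The subgroup of periods of a subset `X` of an abelian group:
`{g | X + g = X}`. -/
def periods {G : Type*} [AddCommGroup G] (X : Set G) : AddSubgroup G where
  carrier := {g | ∀ x : G, x + g ∈ X ↔ x ∈ X}
  zero_mem' := by simp
  add_mem' := by
    intro a b ha hb x
    rw [← add_assoc]
    exact (hb _).trans (ha x)
  neg_mem' := by
    intro a ha x
    have := ha (x + -a)
    simpa using this.symm

/-- `(A, B)` is a factorization of the abelian group `G`: every element of `G` can be
uniquely written as `a + b` with `a ∈ A` and `b ∈ B`. -/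
def IsFactorization {G : Type*} [AddCommGroup G] (A B : Set G) : Prop :=
  ∀ g : G, ∃! ab : G × G, ab.1 ∈ A ∧ ab.2 ∈ B ∧ ab.1 + ab.2 = g

/-- An abelian group is good if in every factorization of it into two factors
at least one factor is periodic. -/
def IsGood (G : Type*) [AddCommGroup G] : Prop :=
  ∀ A B : Set G, IsFactorization A B → periods A ≠ ⊥ ∨ periods B ≠ ⊥

/-- Membership in the set `{p^k, p^k q, p²q², pqr, p²qr, pqrs : p, q, r, s distinct primes, k ≥ 1}`. -/
def InN (n : ℕ) : Prop :=
  ∃ p q r s k : ℕ, p.Prime ∧ q.Prime ∧ r.Prime ∧ s.Prime ∧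
    p ≠ q ∧ p ≠ r ∧ p ≠ s ∧ q ≠ r ∧ q ≠ s ∧ r ≠ s ∧ 1 ≤ k ∧
    (n = p ^ k ∨ n = p ^ k * q ∨ n = p ^ 2 * q ^ 2 ∨ n = p * q * r ∨
      n = p ^ 2 * q * r ∨ n = p * q * r * s)

namespace TPCaux


variable {n p : ℕ} [NeZero n] [Fact p.Prime]


variable {n : ℕ} [NeZero n]

/-- exact factorization with dilation `d` on the second factor -/
def ExactD (A B : Finset (ZMod n)) (d : ℕ) : Prop :=
  ∀ g : ZMod n, ∃! ab : ZMod n × ZMod n, ab ∈ A ×ˢ B ∧ ab.1 + d • ab.2 = g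

open scoped Classical in
noncomputable def Nd (A B : Finset (ZMod n)) (d : ℕ) (g : ZMod n) : ℕ :=
  ((A ×ˢ B).filter fun ab => ab.1 + d • ab.2 = g).card

lemma card_filter_eq_one_iff {α : Type*} (s : Finset α) (q : α → Prop) [DecidablePred q] :
    (s.filter q).card = 1 ↔ ∃! x, x ∈ s ∧ q x := by
  rw [Finset.card_eq_one]
  constructor
  · rintro ⟨a, ha⟩
    have haa : a ∈ s.filter q := ha ▸ Finset.mem_singleton_self a
    rw [Finset.mem_filter] at haa
    refine ⟨a, haa, fun x hx => ?_⟩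
    have : x ∈ s.filter q := Finset.mem_filter.2 hx
    rw [ha, Finset.mem_singleton] at this; exact this
  · rintro ⟨a, ⟨has, hqa⟩, hu⟩
    refine ⟨a, ?_⟩
    ext x
    simp only [Finset.mem_filter, Finset.mem_singleton]
    exact ⟨fun h => hu x h, fun h => h ▸ ⟨has, hqa⟩⟩

lemma exactD_iff_Nd (A B : Finset (ZMod n)) (d : ℕ) :
    ExactD A B d ↔ ∀ g, Nd A B d g = 1 := by
  classical
  unfold ExactD Nd
  refine forall_congr' fun g => ?_
  rw [card_filter_eq_one_iff]


abbrev R (p n : ℕ) := AddMonoidAlgebra (ZMod p) (ZMod n)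

instance : CharP (R p n) p :=
  charP_of_injective_algebraMap (R := ZMod p)
    (by rw [AddMonoidAlgebra.coe_algebraMap]
        exact (AddMonoidAlgebra.single_right_injective (m := 0)).comp (fun a b h => h)) p

noncomputable def el (A : Finset (ZMod n)) : R p n :=
  ∑ x ∈ A, AddMonoidAlgebra.single x (1 : ZMod p)

noncomputable def sig (p n : ℕ) [NeZero n] : R p n :=
  ∑ g : ZMod n, AddMonoidAlgebra.single g (1 : ZMod p)

lemma sig_mul_single (y : ZMod n) : sig p n * AddMonoidAlgebra.single y (1 : ZMod p) = sig p n := by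
  unfold sig
  rw [Finset.sum_mul]
  simp only [AddMonoidAlgebra.single_mul_single, mul_one]
  exact Fintype.sum_bijective (· + y) (AddGroup.addRight_bijective y)
    (fun x => AddMonoidAlgebra.single (x + y) (1 : ZMod p))
    (fun g => AddMonoidAlgebra.single g (1 : ZMod p)) (fun x => rfl)

lemma sig_mul_el (B : Finset (ZMod n)) :
    sig p n * el B = (B.card : ZMod p) • sig p n := by
  unfold el
  rw [Finset.mul_sum]
  simp only [sig_mul_single]
  rw [Finset.sum_const, Nat.cast_smul_eq_nsmul]

lemma sig_mul_el_pow (B : Finset (ZMod n)) (k : ℕ) :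
    sig p n * (el B) ^ k = ((B.card : ZMod p) ^ k) • sig p n := by
  induction k with
  | zero => simp
  | succ k ih =>
      rw [pow_succ, ← mul_assoc, ih, smul_mul_assoc, sig_mul_el, smul_smul, pow_succ]


lemma el_pow_char (B : Finset (ZMod n)) :
    (el B : R p n) ^ p = ∑ y ∈ B, AddMonoidAlgebra.single (p • y) (1 : ZMod p) := by
  unfold el
  rw [sum_pow_char]
  simp [AddMonoidAlgebra.single_pow]

lemma mul_expand (A B : Finset (ZMod n)) (d : ℕ) :
    (el A : R p n) * (∑ y ∈ B, AddMonoidAlgebra.single (d • y) (1 : ZMod p)) =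
      ∑ ab ∈ A ×ˢ B, AddMonoidAlgebra.single (ab.1 + d • ab.2) (1 : ZMod p) := by
  unfold el
  rw [Finset.sum_mul_sum, ← Finset.sum_product']
  simp [AddMonoidAlgebra.single_mul_single]

lemma coeff_expand (A B : Finset (ZMod n)) (d : ℕ) (g : ZMod n) :
    (∑ ab ∈ A ×ˢ B, AddMonoidAlgebra.single (ab.1 + d • ab.2) (1 : ZMod p) : R p n).coeff g =
      (Nd A B d g : ZMod p) := by
  classical
  rw [AddMonoidAlgebra.coeff_sum, Finset.sum_apply']
  unfold Nd
  rw [← Finset.sum_boole]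
  refine Finset.sum_congr rfl fun ab _ => ?_
  rw [AddMonoidAlgebra.coeff_single, Finsupp.single_apply]

lemma coeff_sig (g : ZMod n) : (sig p n : R p n).coeff g = 1 := by
  unfold sig
  rw [AddMonoidAlgebra.coeff_sum, Finset.sum_apply']
  simp only [AddMonoidAlgebra.coeff_single, Finsupp.single_apply]
  rw [Finset.sum_ite_eq' Finset.univ g (fun _ => (1 : ZMod p))]
  simp

lemma step (A B : Finset (ZMod n)) (hB : ¬ p ∣ B.card) (hex : ExactD A B 1) :
    ∀ g, (Nd A B p g : ZMod p) = 1 := by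
  have h1 : (el A : R p n) * el B = sig p n := by
    have expand : (el A : R p n) * el B =
        ∑ ab ∈ A ×ˢ B, AddMonoidAlgebra.single (ab.1 + (1:ℕ) • ab.2) (1 : ZMod p) := by
      rw [← mul_expand]
      unfold el
      simp
    refine AddMonoidAlgebra.ext (Finsupp.ext fun g => ?_)
    rw [expand, coeff_expand, coeff_sig, (exactD_iff_Nd A B 1).mp hex g, Nat.cast_one]
  have h2 : (el A : R p n) * (el B) ^ p = sig p n := by
    have hp1 : p = (p - 1) + 1 := (Nat.succ_pred_eq_of_pos (Fact.out : p.Prime).pos).symm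
    calc (el A : R p n) * (el B) ^ p = (el A * el B) * (el B) ^ (p-1) := by
          rw [mul_assoc, ← pow_succ', ← hp1]
      _ = sig p n * (el B) ^ (p-1) := by rw [h1]
      _ = ((B.card : ZMod p) ^ (p-1)) • sig p n := sig_mul_el_pow B (p-1)
      _ = sig p n := by
          rw [ZMod.pow_card_sub_one_eq_one (by
            simpa [ZMod.natCast_eq_zero_iff] using hB), one_smul]
  have h3 : (∑ ab ∈ A ×ˢ B, AddMonoidAlgebra.single (ab.1 + p • ab.2) (1 : ZMod p) : R p n)
      = sig p n := by
    rw [← mul_expand, ← el_pow_char, h2]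
  intro g
  have h4 := congrArg (fun f : R p n => f.coeff g) h3
  rw [coeff_expand, coeff_sig] at h4
  exact h4

lemma sum_Nd (A B : Finset (ZMod n)) (d : ℕ) :
    ∑ g : ZMod n, Nd A B d g = (A ×ˢ B).card := by
  classical
  rw [Finset.card_eq_sum_card_fiberwise
    (f := fun ab : ZMod n × ZMod n => ab.1 + d • ab.2) (t := Finset.univ)
    (fun ab _ => Finset.mem_univ _)]
  unfold Nd
  rfl

lemma step_exact (A B : Finset (ZMod n)) (hB : ¬ p ∣ B.card) (hex : ExactD A B 1) :
    ExactD A B p := by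
  rw [exactD_iff_Nd]
  have hmod := step A B hB hex
  have hpos : ∀ g : ZMod n, 1 ≤ Nd A B p g := by
    intro g
    rcases Nat.eq_zero_or_pos (Nd A B p g) with h | h
    · exfalso
      have := hmod g
      rw [h, Nat.cast_zero] at this
      exact zero_ne_one this
    · exact h
  have hc : (A ×ˢ B).card = ∑ _g : ZMod n, 1 := by
    rw [← sum_Nd A B 1]
    exact Finset.sum_congr rfl fun g _ => (exactD_iff_Nd A B 1).mp hex g
  have hsum : ∑ g : ZMod n, Nd A B p g = ∑ _g : ZMod n, 1 := by rw [sum_Nd, hc]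
  intro g
  have heq := (Finset.sum_eq_sum_iff_of_le (f := fun _ => 1)
    (g := fun i => Nd A B p i) (fun i _ => hpos i)).mp hsum.symm
  exact (heq g (Finset.mem_univ g)).symm

lemma exact_nonempty {A B : Finset (ZMod n)} {d : ℕ} (hex : ExactD A B d) : A.Nonempty := by
  obtain ⟨ab, ⟨hmem, _⟩, _⟩ := hex 0
  exact ⟨ab.1, (Finset.mem_product.mp hmem).1⟩

lemma dilate_inj {A B : Finset (ZMod n)} {d : ℕ} (hex : ExactD A B d) :
    ∀ y ∈ B, ∀ y' ∈ B, d • y = d • y' → y = y' := by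
  intro y hy y' hy' hEq
  obtain ⟨a, ha⟩ := exact_nonempty hex
  obtain ⟨ab, _, hu⟩ := hex (a + d • y)
  have h1 := hu (a, y) ⟨Finset.mem_product.mpr ⟨ha, hy⟩, rfl⟩
  have h2 := hu (a, y') ⟨Finset.mem_product.mpr ⟨ha, hy'⟩, by rw [← hEq]⟩
  have := h1.trans h2.symm
  exact (Prod.mk.injEq _ _ _ _ ▸ this).2

lemma image_exact {A B : Finset (ZMod n)} {d : ℕ} (hex : ExactD A B d) :
    ExactD A (B.image (d • ·)) 1 := by
  classical
  intro g
  obtain ⟨⟨a, y⟩, ⟨hmem, hsum⟩, hu⟩ := hex g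
  obtain ⟨ha, hy⟩ := Finset.mem_product.mp hmem
  refine ⟨(a, d • y), ⟨Finset.mem_product.mpr ⟨ha, Finset.mem_image.mpr ⟨y, hy, rfl⟩⟩,
    by simpa using hsum⟩, ?_⟩
  rintro ⟨a', b'⟩ ⟨hmem', hsum'⟩
  obtain ⟨ha', hb'⟩ := Finset.mem_product.mp hmem'
  obtain ⟨y', hy', rfl⟩ := Finset.mem_image.mp hb'
  have := hu (a', y') ⟨Finset.mem_product.mpr ⟨ha', hy'⟩, by simpa using hsum'⟩
  rw [Prod.mk.injEq] at this ⊢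
  exact ⟨this.1, by rw [this.2]⟩

lemma exact_comp {A B : Finset (ZMod n)} {e p : ℕ}
    (hexp : ExactD A B p) (hex1 : ExactD A (B.image (p • ·)) e) :
    ExactD A B (e * p) := by
  classical
  intro g
  obtain ⟨⟨a, b'⟩, ⟨hmem, hsum⟩, hu⟩ := hex1 g
  obtain ⟨ha, hb'⟩ := Finset.mem_product.mp hmem
  obtain ⟨y, hy, rfl⟩ := Finset.mem_image.mp hb'
  refine ⟨(a, y), ⟨Finset.mem_product.mpr ⟨ha, hy⟩, by rw [mul_smul]; exact hsum⟩, ?_⟩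
  rintro ⟨a₁, y₁⟩ ⟨hmem₁, hsum₁⟩
  obtain ⟨ha₁, hy₁⟩ := Finset.mem_product.mp hmem₁
  have h₁ := hu (a₁, p • y₁) ⟨Finset.mem_product.mpr ⟨ha₁, Finset.mem_image.mpr ⟨y₁, hy₁, rfl⟩⟩,
    by rw [← mul_smul]; exact hsum₁⟩
  rw [Prod.mk.injEq] at h₁ ⊢
  exact ⟨h₁.1, dilate_inj hexp y₁ hy₁ y hy h₁.2⟩

lemma mult_all {A : Finset (ZMod n)} :
    ∀ d : ℕ, 0 < d → ∀ B : Finset (ZMod n), ExactD A B 1 →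
      (∀ q : ℕ, q.Prime → q ∣ d → ¬ q ∣ B.card) → ExactD A B d := by
  intro d
  induction d using Nat.strong_induction_on with
  | _ d IH =>
    intro hd B h1 hpr
    rcases eq_or_lt_of_le (Nat.one_le_iff_ne_zero.mpr hd.ne') with h | h
    · rw [← h]; exact h1
    · classical
      set p := d.minFac with hpdef
      have hp : p.Prime := Nat.minFac_prime (by omega)
      haveI : Fact p.Prime := ⟨hp⟩
      have hpd : p ∣ d := Nat.minFac_dvd d
      have hB : ¬ p ∣ B.card := hpr p hp hpd
      have hexp : ExactD A B p := step_exact A B hB h1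
      set B' := B.image (p • ·) with hB'def
      have hcard : B'.card = B.card :=
        Finset.card_image_of_injOn (fun y hy y' hy' => dilate_inj hexp y hy y' hy')
      have hex1' : ExactD A B' 1 := image_exact hexp
      have he : d / p < d := Nat.div_lt_self hd hp.one_lt
      have hepos : 0 < d / p := Nat.div_pos (Nat.minFac_le hd) hp.pos
      have hexe : ExactD A B' (d / p) := by
        refine IH (d / p) he hepos B' hex1' fun q hq hqd => ?_
        rw [hcard]
        exact hpr q hq (hqd.trans (Nat.div_dvd_of_dvd hpd))
      have := exact_comp hexp hexe
      rwa [Nat.div_mul_cancel hpd] at this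

lemma key {A B : Finset (ZMod n)} (hex : ExactD A B 1) (hm : A.card ∣ n)
    (hcop : Nat.Coprime A.card (n / A.card)) :
    Set.InjOn (ZMod.castHom hm (ZMod A.card)) ↑A := by
  classical
  have hAne : A.Nonempty := exact_nonempty hex
  haveI : NeZero A.card := ⟨hAne.card_pos.ne'⟩
  have hABcard : A.card * B.card = n := by
    have h1 := sum_Nd A B 1
    have h2 : ∀ g : ZMod n, Nd A B 1 g = 1 := (exactD_iff_Nd A B 1).mp hex
    rw [Finset.sum_congr rfl (fun g _ => h2 g)] at h1
    simp only [Finset.sum_const, smul_eq_mul, mul_one, Finset.card_univ, ZMod.card] at h1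
    rw [Finset.card_product] at h1
    omega
  have hBcard : B.card = n / A.card :=
    (Nat.div_eq_of_eq_mul_left hAne.card_pos (hABcard.symm.trans (mul_comm _ _))).symm
  have hpr : ∀ q : ℕ, q.Prime → q ∣ A.card → ¬ q ∣ B.card := by
    intro q hq hqA hqB
    rw [hBcard] at hqB
    exact Nat.Prime.one_lt hq |>.ne' (Nat.eq_one_of_dvd_coprimes hcop hqA hqB ▸ rfl)
  have hexm : ExactD A B A.card := mult_all A.card hAne.card_pos B hex hpr
  set φ := ZMod.castHom hm (ZMod A.card) with hφ
  have hker : ∀ y : ZMod n, φ ((A.card : ℕ) • y) = 0 := by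
    intro y
    rw [map_nsmul, nsmul_eq_mul, ZMod.natCast_self, zero_mul]
  have hsurj : ∀ t : ZMod A.card, ∃ a ∈ A, φ a = t := by
    intro t
    obtain ⟨k, rfl⟩ := ZMod.natCast_zmod_surjective (n := A.card) t
    obtain ⟨⟨a, y⟩, ⟨hmem, hsum⟩, -⟩ := hexm ((k : ZMod n))
    obtain ⟨ha, hy⟩ := Finset.mem_product.mp hmem
    refine ⟨a, ha, ?_⟩
    have := congrArg φ hsum
    rw [map_add, hker] at this
    simpa using this
  have himage : A.image φ = Finset.univ := by
    apply Finset.eq_univ_of_forall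
    intro t
    obtain ⟨a, ha, hat⟩ := hsurj t
    exact Finset.mem_image.mpr ⟨a, ha, hat⟩
  have hcardim : (A.image φ).card = A.card := by
    rw [himage, Finset.card_univ, ZMod.card]
  exact Finset.injOn_of_card_image_eq hcardim


lemma cayley_adj {n : ℕ} {S : Set (ZMod n)} (h0 : (0 : ZMod n) ∉ S)
    (hinv : ∀ s ∈ S, -s ∈ S) (v c : ZMod n) :
    (cayley S).Adj v c ↔ c - v ∈ S := by
  rw [cayley, SimpleGraph.fromRel_adj]
  constructor
  · rintro ⟨hne, h | h⟩
    · exact h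
    · simpa [neg_sub] using hinv _ h
  · intro h
    refine ⟨?_, Or.inl h⟩
    rintro rfl
    rw [sub_self] at h
    exact (h0 h).elim

lemma two_le_of_inN {n : ℕ} (h : InN n) : 2 ≤ n := by
  obtain ⟨p, q, r, s, k, hp, hq, hr, hs, _, _, _, _, _, _, hk, hc⟩ := h
  have h2 : 2 ≤ p := hp.two_le
  have hq1 : 0 < q := hq.pos
  have hr1 : 0 < r := hr.pos
  have hs1 : 0 < s := hs.pos
  have hpk : 2 ≤ p ^ k := le_trans h2 (Nat.le_self_pow (by omega) p)
  have hp2 : 2 ≤ p ^ 2 := le_trans h2 (Nat.le_self_pow (by omega) p)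
  rcases hc with rfl | rfl | rfl | rfl | rfl | rfl
  · exact hpk
  · calc 2 ≤ p^k := hpk
      _ ≤ p^k*q := Nat.le_mul_of_pos_right _ hq1
  · calc 2 ≤ p^2 := hp2
      _ ≤ p^2*q^2 := Nat.le_mul_of_pos_right _ (by positivity)
  · calc 2 ≤ p := h2
      _ ≤ p*q := Nat.le_mul_of_pos_right _ hq1
      _ ≤ p*q*r := Nat.le_mul_of_pos_right _ hr1
  · calc 2 ≤ p^2 := hp2
      _ ≤ p^2*q := Nat.le_mul_of_pos_right _ hq1
      _ ≤ p^2*q*r := Nat.le_mul_of_pos_right _ hr1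
  · calc 2 ≤ p := h2
      _ ≤ p*q := Nat.le_mul_of_pos_right _ hq1
      _ ≤ p*q*r := Nat.le_mul_of_pos_right _ hr1
      _ ≤ p*q*r*s := Nat.le_mul_of_pos_right _ hs1

end TPCaux

/-- Theorem 5.6: let `n ∈ {p^k, p^k q, p²q², pqr, p²qr, pqrs}` and `S` an
inverse-closed generating subset of `ℤ_n ∖ {0}` such that `|S| ∣ n` and `|S|` is
coprime to `n/|S|`. Then `Cay(ℤ_n, S)` admits a total perfect code iff
`s ≢ s' (mod |S|)` for any two distinct `s, s' ∈ S`. -/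
theorem totalPerfectCode_iff_good_orders (n : ℕ) (hN : InN n)
    (S : Set (ZMod n)) (h0 : (0 : ZMod n) ∉ S) (hinv : ∀ s ∈ S, -s ∈ S)
    (hgen : AddSubgroup.closure S = ⊤)
    (hdvd : S.ncard ∣ n) (hcop : Nat.Coprime S.ncard (n / S.ncard)) :
    (∃ C : Set (ZMod n), IsTotalPerfectCode (cayley S) C) ↔
      ∀ s ∈ S, ∀ s' ∈ S, s ≠ s' → ¬ (s.val ≡ s'.val [MOD S.ncard]) := by

  classical
  have hn2 : 2 ≤ n := TPCaux.two_le_of_inN hN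
  haveI : NeZero n := ⟨by omega⟩
  haveI : Fact (1 < n) := ⟨by omega⟩
  have hSfin : S.Finite := Set.toFinite S
  set A : Finset (ZMod n) := hSfin.toFinset with hA
  have hmemA : ∀ x, x ∈ A ↔ x ∈ S := fun x => hSfin.mem_toFinset
  have hAcard : A.card = S.ncard := (Set.ncard_eq_toFinset_card S hSfin).symm
  have hmdvd : A.card ∣ n := hAcard ▸ hdvd
  set φ := ZMod.castHom hmdvd (ZMod A.card) with hφ
  have hφval : ∀ x : ZMod n, φ x = ((x.val : ℕ) : ZMod A.card) := by
    intro x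
    rw [ZMod.castHom_apply, ← ZMod.natCast_val]
  have hmodiff : ∀ s s' : ZMod n, (s.val ≡ s'.val [MOD S.ncard]) ↔ φ s = φ s' := by
    intro s s'
    rw [hφval, hφval, hAcard, ZMod.natCast_eq_natCast_iff]
  constructor
  · rintro ⟨C, hC⟩
    set Bf : Finset (ZMod n) := (Set.toFinite C).toFinset with hBf
    have hmemB : ∀ x, x ∈ Bf ↔ x ∈ C := fun x => (Set.toFinite C).mem_toFinset
    have hex : TPCaux.ExactD A Bf 1 := by
      intro g
      obtain ⟨c, ⟨hcC, hadj⟩, hu⟩ := hC g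
      have hcs : c - g ∈ S := (TPCaux.cayley_adj h0 hinv g c).mp hadj
      refine ⟨(g - c, c), ⟨Finset.mem_product.mpr ⟨(hmemA _).mpr
        (by simpa [neg_sub] using hinv _ hcs), (hmemB _).mpr hcC⟩,
        by rw [one_smul]; exact sub_add_cancel g c⟩, ?_⟩
      rintro ⟨x, y⟩ ⟨hmem, hsum⟩
      obtain ⟨hxA, hyB⟩ := Finset.mem_product.mp hmem
      rw [one_smul] at hsum
      simp only at hsum
      have hxS : x ∈ S := (hmemA _).mp hxA
      have hadj' : (cayley S).Adj g y := by
        rw [TPCaux.cayley_adj h0 hinv]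
        have hyg : y - g = -x := by rw [← hsum]; abel
        rw [hyg]
        exact hinv _ hxS
      have hyc : y = c := hu y ⟨(hmemB _).mp hyB, hadj'⟩
      have hxg : x = g - c := by rw [← hyc, ← hsum]; abel
      rw [Prod.mk.injEq]
      exact ⟨hxg, hyc⟩
    have hinj : Set.InjOn φ ↑A := TPCaux.key hex hmdvd (by rw [hAcard]; exact hcop)
    intro s hs s' hs' hne hmod
    exact hne (hinj (Finset.mem_coe.mpr ((hmemA s).mpr hs))
      (Finset.mem_coe.mpr ((hmemA s').mpr hs')) ((hmodiff s s').mp hmod))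
  · intro hrhs
    have hSne : S.Nonempty := by
      by_contra hemp
      rw [Set.not_nonempty_iff_eq_empty] at hemp
      rw [hemp, AddSubgroup.closure_empty] at hgen
      have h1 : (1 : ZMod n) ∈ (⊥ : AddSubgroup (ZMod n)) := hgen ▸ AddSubgroup.mem_top 1
      rw [AddSubgroup.mem_bot] at h1
      exact one_ne_zero h1
    haveI : NeZero A.card := ⟨by rw [hAcard]; exact ((Set.ncard_pos hSfin).mpr hSne).ne'⟩
    have hinj : Set.InjOn φ ↑A := by
      intro s hs s' hs' hEq
      by_contra hne
      exact hrhs s ((hmemA s).mp (Finset.mem_coe.mp hs)) s'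
        ((hmemA s').mp (Finset.mem_coe.mp hs')) hne ((hmodiff s s').mpr hEq)
    have himg : A.image φ = Finset.univ := by
      apply Finset.eq_univ_of_card
      rw [Finset.card_image_of_injOn hinj, ZMod.card]
    refine ⟨{x : ZMod n | φ x = 0}, ?_⟩
    intro v
    have hv : -φ v ∈ A.image φ := by rw [himg]; exact Finset.mem_univ _
    obtain ⟨a, haA, hav⟩ := Finset.mem_image.mp hv
    refine ⟨v + a, ⟨show φ (v + a) = 0 by rw [map_add, hav]; ring,
      (TPCaux.cayley_adj h0 hinv _ _).mpr (by rw [add_sub_cancel_left]; exact (hmemA a).mp haA)⟩, ?_⟩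
    rintro c' ⟨hc'0, hadj'⟩
    have hs' : c' - v ∈ S := (TPCaux.cayley_adj h0 hinv _ _).mp hadj'
    have hphieq : φ (c' - v) = φ a := by
      have hc'z : φ c' = 0 := hc'0
      rw [map_sub, hav, hc'z]
      ring
    have heq := hinj (Finset.mem_coe.mpr ((hmemA _).mpr hs')) (Finset.mem_coe.mpr haA) hphieq
    rw [← heq]
    abel
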